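/- arXiv:2305.13229 — 2 statements merged into one kernel-verified Lean document; each statement's English description precedes it below -/
import Mathlib

section
/- Let (ξ_i, Y_i), i ≥ 1, be i.i.d. random vectors with ξ_1 > 0 and E[ξ_1] < ∞. Let T_n = ξ_1 + ... + ξ_n and N(t) = max{n : T_n ≤ t}. Then the family of random variables {Y_{N(t)+1} : t ≥ 0} is tight (stochastically bounded). -/
open MeasureTheory ProbabilityTheory Filter Set Topology
open scoped ENNReal NNReal

noncomputable section

variable {Ω : Type*} [MeasurableSpace Ω]

/-- The renewal times `T n = ξ 1 + ⋯ + ξ n` (here `ξ i` in Lean is `ξ_{i+1}` in math). -/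
def rT (ξ : ℕ → Ω → ℝ) (n : ℕ) (ω : Ω) : ℝ := ∑ i ∈ Finset.range n, ξ i ω

/-- `N(t) = max {n : T n ≤ t}`. -/
def rN (ξ : ℕ → Ω → ℝ) (t : ℝ) (ω : Ω) : ℕ := sSup {n : ℕ | rT ξ n ω ≤ t}

/-- The `n`-th regenerative increment `ζ_{n+1} = (ξ_{n+1}, (Z(t + T_n) - Z(T_n))_{0 ≤ t ≤ ξ_{n+1}})`,
the path being stopped at `ξ_{n+1}`. -/
def rIncr (ξ : ℕ → Ω → ℝ) (Z : ℝ → Ω → ℝ) (n : ℕ) (ω : Ω) : ℝ × (ℝ → ℝ) :=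
  (ξ n ω, fun s => Z (min (max s 0) (ξ n ω) + rT ξ n ω) ω - Z (rT ξ n ω) ω)

/-- `M_{n+1} = sup_{T_n ≤ s ≤ T_{n+1}} |Z(s) - Z(T_n)|`, as an extended real. -/
def rM (ξ : ℕ → Ω → ℝ) (Z : ℝ → Ω → ℝ) (n : ℕ) (ω : Ω) : ℝ≥0∞ :=
  ⨆ s ∈ Set.Icc (rT ξ n ω) (rT ξ (n + 1) ω), ENNReal.ofReal |Z s ω - Z (rT ξ n ω) ω|

/-- `Z` is a càdlàg process with `Z(0) = 0` having regenerative increments over the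
renewal times `T n` built from the positive interarrival times `ξ`. -/
def RegenIncrements (μ : Measure Ω) (ξ : ℕ → Ω → ℝ) (Z : ℝ → Ω → ℝ) : Prop :=
  (∀ n ω, 0 < ξ n ω) ∧
  (∀ ω, Z 0 ω = 0) ∧
  (∀ ω t, ContinuousWithinAt (fun s => Z s ω) (Set.Ici t) t) ∧
  (∀ ω t, 0 < t → ∃ l : ℝ, Filter.Tendsto (fun s => Z s ω) (nhdsWithin t (Set.Iio t)) (nhds l)) ∧
  iIndepFun (rIncr ξ Z) μ ∧
  (∀ n, IdentDistrib (rIncr ξ Z n) (rIncr ξ Z 0) μ μ)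


set_option linter.unusedSectionVars false
set_option maxHeartbeats 1000000

lemma rT_succ (ξ : ℕ → Ω → ℝ) (n : ℕ) (ω : Ω) :
    rT ξ (n + 1) ω = rT ξ n ω + ξ n ω := Finset.sum_range_succ _ _

lemma rT_nonneg {ξ : ℕ → Ω → ℝ} (hpos : ∀ n ω, 0 < ξ n ω) (n : ℕ) (ω : Ω) :
    0 ≤ rT ξ n ω := Finset.sum_nonneg fun i _ => (hpos i ω).le

lemma rT_mono {ξ : ℕ → Ω → ℝ} (hpos : ∀ n ω, 0 < ξ n ω) (ω : Ω) :
    Monotone (fun n => rT ξ n ω) := fun a b hab =>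
  Finset.sum_le_sum_of_subset_of_nonneg (Finset.range_subset_range.2 hab)
    (fun i _ _ => (hpos i ω).le)

lemma measurable_rT {ξ : ℕ → Ω → ℝ} (hm : ∀ n, Measurable (ξ n)) (n : ℕ) :
    Measurable (fun ω => rT ξ n ω) :=
  Finset.measurable_sum _ fun i _ => hm i

/-- pointwise window bound : the sum of truncated interarrival times whose renewal
time falls in a window of length `L` is at most `2L`. -/
lemma window_pointwise {ξ : ℕ → Ω → ℝ} (hpos : ∀ n ω, 0 < ξ n ω)
    {L s : ℝ} (hL : 0 < L) (ω : Ω) (N : ℕ) :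
    ∑ i ∈ Finset.range N, (if ξ i ω ≤ L then ξ i ω else 0) *
      (if rT ξ i ω ∈ Set.Ioc s (s + L) then (1:ℝ) else 0) ≤ 2 * L := by
  classical
  have hterm : ∀ i, (if ξ i ω ≤ L then ξ i ω else 0) *
      (if rT ξ i ω ∈ Set.Ioc s (s + L) then (1:ℝ) else 0)
      = if (ξ i ω ≤ L ∧ rT ξ i ω ∈ Set.Ioc s (s + L)) then ξ i ω else 0 := by
    intro i
    by_cases h1 : ξ i ω ≤ L <;> by_cases h2 : rT ξ i ω ∈ Set.Ioc s (s + L) <;>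
      simp [h1, h2]
  rw [Finset.sum_congr rfl fun i _ => hterm i, ← Finset.sum_filter]
  set S := (Finset.range N).filter
    (fun i => ξ i ω ≤ L ∧ rT ξ i ω ∈ Set.Ioc s (s + L)) with hS
  rcases S.eq_empty_or_nonempty with h | h
  · rw [h]; simp; positivity
  · set k := S.min' h with hk
    set j := S.max' h with hj
    have hkj : k ≤ j := Finset.min'_le _ _ (S.max'_mem h)
    have hksub : S ⊆ Finset.Icc k j := fun i hi =>
      Finset.mem_Icc.2 ⟨Finset.min'_le _ _ hi, Finset.le_max' _ _ hi⟩
    have h1 : ∑ i ∈ S, ξ i ω ≤ ∑ i ∈ Finset.Icc k j, ξ i ω :=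
      Finset.sum_le_sum_of_subset_of_nonneg hksub (fun i _ _ => (hpos i ω).le)
    have h2 : ∑ i ∈ Finset.Icc k j, ξ i ω = rT ξ (j + 1) ω - rT ξ k ω := by
      rw [← Finset.Ico_add_one_right_eq_Icc, Finset.sum_Ico_eq_sub _ (show k ≤ j + 1 by omega)]
      rfl
    have hkmem := Finset.mem_filter.1 (S.min'_mem h)
    have hjmem := Finset.mem_filter.1 (S.max'_mem h)
    have hks : s < rT ξ k ω := hkmem.2.2.1
    have hjL : ξ j ω ≤ L := hjmem.2.1
    have hjs : rT ξ j ω ≤ s + L := hjmem.2.2.2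
    have h3 : rT ξ (j + 1) ω = rT ξ j ω + ξ j ω := rT_succ _ _ _
    linarith

lemma indep_T_pair {μ : Measure Ω} {ξ Y : ℕ → Ω → ℝ}
    (hm : ∀ n, Measurable fun ω => (ξ n ω, Y n ω))
    (hindep : iIndepFun (fun n ω => (ξ n ω, Y n ω)) μ) (n : ℕ) :
    IndepFun (fun ω => rT ξ n ω) (fun ω => (ξ n ω, Y n ω)) μ := by
  have hd : Disjoint (Finset.range n) ({n} : Finset ℕ) := by simp
  have h := hindep.indepFun_finset (Finset.range n) {n} hd hm
  have hφ : Measurable (fun v : ((Finset.range n : Finset ℕ) : Type) → ℝ × ℝ =>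
      ∑ i : (Finset.range n : Finset ℕ), (v i).1) :=
    Finset.measurable_sum _ fun i _ => (measurable_pi_apply i).fst
  have hψ : Measurable (fun v : (({n} : Finset ℕ) : Type) → ℝ × ℝ =>
      v ⟨n, Finset.mem_singleton_self n⟩) := measurable_pi_apply _
  have h2 := h.comp hφ hψ
  have e1 : ((fun v : ((Finset.range n : Finset ℕ) : Type) → ℝ × ℝ =>
      ∑ i : (Finset.range n : Finset ℕ), (v i).1) ∘
      (fun a (i : (Finset.range n : Finset ℕ)) => (ξ i a, Y i a)))
      = fun ω => rT ξ n ω := by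
    funext ω
    show ∑ i : (Finset.range n : Finset ℕ), (ξ (i : ℕ) ω, Y (i : ℕ) ω).1 = _
    simp only [rT]
    exact Finset.sum_coe_sort (Finset.range n) (fun i => ξ i ω)
  have e2 : ((fun v : (({n} : Finset ℕ) : Type) → ℝ × ℝ =>
      v ⟨n, Finset.mem_singleton_self n⟩) ∘
      (fun a (i : (({n} : Finset ℕ) : Type)) => (ξ i a, Y i a)))
      = fun ω => (ξ n ω, Y n ω) := rfl
  rwa [e1, e2] at h2

lemma tsum_measure_le_of_partial {μ : Measure Ω} [IsProbabilityMeasure μ]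
    {A : ℕ → Set Ω} {b : ℝ}
    (h : ∀ N, ∑ i ∈ Finset.range N, (μ (A i)).toReal ≤ b) :
    ∑' n, μ (A n) ≤ ENNReal.ofReal b := by
  rw [ENNReal.tsum_eq_iSup_sum]
  refine iSup_le fun F => ?_
  obtain ⟨N, hFN⟩ := F.exists_nat_subset_range
  calc ∑ i ∈ F, μ (A i) ≤ ∑ i ∈ Finset.range N, μ (A i) :=
        Finset.sum_le_sum_of_subset hFN
    _ = ENNReal.ofReal (∑ i ∈ Finset.range N, (μ (A i)).toReal) := by
        rw [ENNReal.ofReal_sum_of_nonneg fun i _ => ENNReal.toReal_nonneg]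
        exact Finset.sum_congr rfl fun i _ =>
          (ENNReal.ofReal_toReal (measure_ne_top μ _)).symm
    _ ≤ ENNReal.ofReal b := ENNReal.ofReal_le_ofReal (h N)

/-- The key renewal-window estimate. -/
lemma star_bound {μ : Measure Ω} [IsProbabilityMeasure μ] {ξ Y : ℕ → Ω → ℝ}
    (hpos : ∀ n ω, 0 < ξ n ω)
    (hm : ∀ n, Measurable fun ω => (ξ n ω, Y n ω))
    (hindep : iIndepFun (fun n ω => (ξ n ω, Y n ω)) μ)
    (hident : ∀ n, IdentDistrib (fun ω => (ξ n ω, Y n ω)) (fun ω => (ξ 0 ω, Y 0 ω)) μ μ)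
    {L : ℝ} (hL : 0 < L)
    (hq : 0 < ∫ ω, (if ξ 0 ω ≤ L then ξ 0 ω else 0) ∂μ) (s : ℝ) :
    ∑' n, μ ((fun ω => rT ξ n ω) ⁻¹' Set.Ioc s (s + L)) ≤
      ENNReal.ofReal (2 * L / ∫ ω, (if ξ 0 ω ≤ L then ξ 0 ω else 0) ∂μ) := by
  classical
  set q : ℝ := ∫ ω, (if ξ 0 ω ≤ L then ξ 0 ω else 0) ∂μ with hqdef
  have hmξ : ∀ n, Measurable (ξ n) := fun n => (measurable_fst.comp (hm n))
  set X : ℕ → Ω → ℝ := fun i ω => if ξ i ω ≤ L then ξ i ω else 0 with hX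
  set V : ℕ → Ω → ℝ := fun i ω => if rT ξ i ω ∈ Set.Ioc s (s + L) then (1:ℝ) else 0
    with hV
  set A : ℕ → Set Ω := fun i => (fun ω => rT ξ i ω) ⁻¹' Set.Ioc s (s + L) with hA
  have hφmeas : Measurable (fun p : ℝ × ℝ => if p.1 ≤ L then p.1 else 0) :=
    Measurable.ite (measurableSet_le measurable_fst measurable_const)
      measurable_fst measurable_const
  have hψmeas : Measurable (fun x : ℝ => if x ∈ Set.Ioc s (s + L) then (1:ℝ) else 0) :=
    Measurable.ite measurableSet_Ioc measurable_const measurable_const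
  have hmX : ∀ i, Measurable (X i) := fun i => hφmeas.comp (hm i)
  have hmV : ∀ i, Measurable (V i) := fun i => hψmeas.comp (measurable_rT hmξ i)
  have hXnonneg : ∀ i ω, 0 ≤ X i ω := by
    intro i ω; simp only [hX]; split
    · exact (hpos i ω).le
    · exact le_rfl
  have hVnonneg : ∀ i ω, 0 ≤ V i ω := by
    intro i ω; simp only [hV]; split
    · exact zero_le_one
    · exact le_rfl
  have hXle : ∀ i ω, X i ω ≤ L := by
    intro i ω; simp only [hX]; split
    · assumption
    · exact hL.le
  have hVle : ∀ i ω, V i ω ≤ 1 := by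
    intro i ω; simp only [hV]; split
    · exact le_rfl
    · exact zero_le_one
  have hmeasA : ∀ i, MeasurableSet (A i) :=
    fun i => measurableSet_Ioc.preimage (measurable_rT hmξ i)
  have hintX : ∀ i, ∫ ω, X i ω ∂μ = q := fun i =>
    ((hident i).comp hφmeas).integral_eq
  have hintV : ∀ i, ∫ ω, V i ω ∂μ = (μ (A i)).toReal := by
    intro i
    have hVind : V i = (A i).indicator (fun _ => (1:ℝ)) := by
      funext ω
      simp [hV, hA, Set.indicator_apply, Set.mem_preimage]
    rw [hVind]
    exact integral_indicator_one (hmeasA i)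
  have hprod : ∀ i, ∫ ω, X i ω * V i ω ∂μ = q * (μ (A i)).toReal := by
    intro i
    have hind : IndepFun (X i) (V i) μ :=
      ((indep_T_pair hm hindep i).symm).comp hφmeas hψmeas
    have := hind.integral_fun_mul_eq_mul_integral (hmX i).aestronglyMeasurable
      (hmV i).aestronglyMeasurable
    rw [← hintX i, ← hintV i]
    exact this
  have hInt : ∀ i, Integrable (fun ω => X i ω * V i ω) μ := by
    intro i
    refine (integrable_const L).mono' ((hmX i).mul (hmV i)).aestronglyMeasurable
      (Filter.Eventually.of_forall fun ω => ?_)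
    rw [Real.norm_eq_abs, abs_of_nonneg (mul_nonneg (hXnonneg i ω) (hVnonneg i ω))]
    nlinarith [hXnonneg i ω, hVnonneg i ω, hXle i ω, hVle i ω]
  have partial_bound : ∀ N, ∑ i ∈ Finset.range N, (μ (A i)).toReal ≤ 2 * L / q := by
    intro N
    rw [le_div_iff₀ hq]
    calc (∑ i ∈ Finset.range N, (μ (A i)).toReal) * q
        = ∑ i ∈ Finset.range N, ∫ ω, X i ω * V i ω ∂μ := by
          rw [Finset.sum_mul]
          exact Finset.sum_congr rfl fun i _ => by rw [hprod i]; ring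
      _ = ∫ ω, ∑ i ∈ Finset.range N, X i ω * V i ω ∂μ :=
          (integral_finset_sum _ fun i _ => hInt i).symm
      _ ≤ ∫ _ω, 2 * L ∂μ := by
          refine integral_mono (integrable_finset_sum _ fun i _ => hInt i)
            (integrable_const _) (fun ω => ?_)
          exact window_pointwise hpos hL ω N
      _ = 2 * L := by simp
  exact tsum_measure_le_of_partial partial_bound


/-- tail estimate: `∑_{k≥1} μ(ξ > kL) ≤ E[ξ 1_{ξ>L}]/L`. -/
lemma tail_bound {μ : Measure Ω} [IsProbabilityMeasure μ] {Z : Ω → ℝ}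
    (hmZ : Measurable Z) (hZpos : ∀ ω, 0 < Z ω) (hint : Integrable Z μ)
    {L : ℝ} (hL : 0 < L) :
    ∑' k : ℕ, μ {ω | ((k:ℝ) + 1) * L < Z ω} ≤
      ENNReal.ofReal ((∫ ω, (if L < Z ω then Z ω else 0) ∂μ) / L) := by
  classical
  refine tsum_measure_le_of_partial (fun N => ?_)
  set G : Ω → ℝ := fun ω => if L < Z ω then Z ω / L else 0 with hG
  have hmeasS : ∀ k : ℕ, MeasurableSet {ω | ((k:ℝ) + 1) * L < Z ω} :=
    fun k => measurableSet_lt measurable_const hmZ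
  have hterm : ∀ k : ℕ, (μ {ω | ((k:ℝ) + 1) * L < Z ω}).toReal
      = ∫ ω, (if ((k:ℝ) + 1) * L < Z ω then (1:ℝ) else 0) ∂μ := by
    intro k
    show μ.real {ω | ((k:ℝ) + 1) * L < Z ω} = _
    rw [← integral_indicator_one (hmeasS k)]
    refine integral_congr_ae (Filter.Eventually.of_forall fun ω => ?_)
    simp [Set.indicator_apply]
  have hIntTerm : ∀ k : ℕ, Integrable
      (fun ω => if ((k:ℝ) + 1) * L < Z ω then (1:ℝ) else 0) μ := by
    intro k
    refine (integrable_const 1).mono'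
      ((Measurable.ite (measurableSet_lt measurable_const hmZ) measurable_const
        measurable_const).aestronglyMeasurable)
      (Filter.Eventually.of_forall fun ω => ?_)
    split <;> simp
  have hIntG : Integrable G μ := by
    refine (hint.div_const L).mono'
      ((Measurable.ite (measurableSet_lt measurable_const hmZ) (hmZ.div_const L)
        measurable_const).aestronglyMeasurable)
      (Filter.Eventually.of_forall fun ω => ?_)
    simp only [hG]
    split
    · rw [Real.norm_eq_abs, abs_of_nonneg (div_nonneg (hZpos ω).le hL.le)]
    · rw [norm_zero]; exact div_nonneg (hZpos ω).le hL.le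
  have hpoint : ∀ ω, ∑ k ∈ Finset.range N,
      (if ((k:ℝ) + 1) * L < Z ω then (1:ℝ) else 0) ≤ G ω := by
    intro ω
    by_cases hx : L < Z ω
    · simp only [hG, if_pos hx]
      rw [Finset.sum_boole]
      have hsub : (Finset.range N).filter (fun k : ℕ => ((k:ℝ) + 1) * L < Z ω)
          ⊆ Finset.range ⌊Z ω / L⌋₊ := by
        intro k hk
        have hk2 := (Finset.mem_filter.1 hk).2
        have h3 : ((k:ℝ) + 1) < Z ω / L := by
          rw [lt_div_iff₀ hL]; exact hk2
        have h4 : (k + 1 : ℕ) ≤ ⌊Z ω / L⌋₊ := Nat.le_floor (by push_cast; linarith)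
        exact Finset.mem_range.2 h4
      calc ((Finset.filter (fun k : ℕ => ((k:ℝ) + 1) * L < Z ω)
            (Finset.range N)).card : ℝ)
          ≤ ((Finset.range ⌊Z ω / L⌋₊).card : ℝ) := by
            exact_mod_cast Finset.card_le_card hsub
        _ = (⌊Z ω / L⌋₊ : ℝ) := by rw [Finset.card_range]
        _ ≤ Z ω / L := Nat.floor_le (div_nonneg (hZpos ω).le hL.le)
    · simp only [hG, if_neg hx]
      refine (Finset.sum_eq_zero fun k _ => ?_).le
      have : ¬ ((k:ℝ) + 1) * L < Z ω := by
        push_neg at hx ⊢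
        nlinarith [Nat.cast_nonneg (α := ℝ) k]
      rw [if_neg this]
  calc ∑ k ∈ Finset.range N, (μ {ω | ((k:ℝ) + 1) * L < Z ω}).toReal
      = ∑ k ∈ Finset.range N, ∫ ω, (if ((k:ℝ) + 1) * L < Z ω then (1:ℝ) else 0) ∂μ :=
        Finset.sum_congr rfl fun k _ => hterm k
    _ = ∫ ω, ∑ k ∈ Finset.range N, (if ((k:ℝ) + 1) * L < Z ω then (1:ℝ) else 0) ∂μ :=
        (integral_finset_sum _ fun k _ => hIntTerm k).symm
    _ ≤ ∫ ω, G ω ∂μ := integral_mono (integrable_finset_sum _ fun k _ => hIntTerm k)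
        hIntG hpoint
    _ = (∫ ω, (if L < Z ω then Z ω else 0) ∂μ) / L := by
        rw [← integral_div]
        refine integral_congr_ae (Filter.Eventually.of_forall fun ω => ?_)
        simp only [hG]
        split
        · rfl
        · rw [zero_div]

lemma core {μ : Measure Ω} [IsProbabilityMeasure μ] (ξ Y : ℕ → Ω → ℝ)
    (hpos : ∀ n ω, 0 < ξ n ω)
    (hm : ∀ n, Measurable fun ω => (ξ n ω, Y n ω))
    (hindep : iIndepFun (fun n ω => (ξ n ω, Y n ω)) μ)
    (hident : ∀ n, IdentDistrib (fun ω => (ξ n ω, Y n ω)) (fun ω => (ξ 0 ω, Y 0 ω)) μ μ)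
    (hint : Integrable (ξ 0) μ) :
    ∀ ε > (0:ℝ), ∃ c > (0:ℝ), ∀ t ≥ (0:ℝ),
      μ {ω | c < |Y (rN ξ t ω) ω|} < ENNReal.ofReal ε := by
  classical
  intro ε hε
  have hmξ : ∀ n, Measurable (ξ n) := fun n => measurable_fst.comp (hm n)
  have hmY : ∀ n, Measurable (Y n) := fun n => measurable_snd.comp (hm n)
  have hIq : ∀ l : ℝ, Integrable (fun ω => if ξ 0 ω ≤ l then ξ 0 ω else 0) μ := by
    intro l
    refine hint.mono' ((Measurable.ite (measurableSet_le (hmξ 0) measurable_const)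
      (hmξ 0) measurable_const).aestronglyMeasurable)
      (Filter.Eventually.of_forall fun ω => ?_)
    split
    · rw [Real.norm_eq_abs, abs_of_nonneg (hpos 0 ω).le]
    · rw [norm_zero]; exact (hpos 0 ω).le
  have hIr : ∀ l : ℝ, Integrable (fun ω => if l < ξ 0 ω then ξ 0 ω else 0) μ := by
    intro l
    refine hint.mono' ((Measurable.ite (measurableSet_lt measurable_const (hmξ 0))
      (hmξ 0) measurable_const).aestronglyMeasurable)
      (Filter.Eventually.of_forall fun ω => ?_)
    split
    · rw [Real.norm_eq_abs, abs_of_nonneg (hpos 0 ω).le]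
    · rw [norm_zero]; exact (hpos 0 ω).le
  set qf : ℝ → ℝ := fun l => ∫ ω, (if ξ 0 ω ≤ l then ξ 0 ω else 0) ∂μ with hqf
  set rf : ℝ → ℝ := fun l => ∫ ω, (if l < ξ 0 ω then ξ 0 ω else 0) ∂μ with hrfdef
  set m : ℝ := ∫ ω, ξ 0 ω ∂μ with hmdef
  have hsplit : ∀ l, qf l + rf l = m := by
    intro l
    simp only [hqf, hrfdef, hmdef]
    rw [← integral_add (hIq l) (hIr l)]
    refine integral_congr_ae (Filter.Eventually.of_forall fun ω => ?_)
    by_cases h : ξ 0 ω ≤ l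
    · simp [h, not_lt.2 h]
    · simp [h, not_le.1 h]
  have hrf_nonneg : ∀ l, 0 ≤ rf l := by
    intro l
    simp only [hrfdef]
    refine integral_nonneg fun ω => ?_
    split
    · exact (hpos 0 ω).le
    · exact le_rfl
  have hmpos : 0 < m := by
    rw [hmdef, integral_pos_iff_support_of_nonneg (fun ω => (hpos 0 ω).le) hint]
    have : Function.support (ξ 0) = Set.univ :=
      Set.eq_univ_of_forall fun ω => (hpos 0 ω).ne'
    rw [this]
    simp
  have hrtend : Tendsto (fun n : ℕ => rf (n:ℝ)) atTop (𝓝 0) := by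
    have h := tendsto_integral_of_dominated_convergence (F := fun (n:ℕ) ω =>
        if (n:ℝ) < ξ 0 ω then ξ 0 ω else 0) (f := fun _ => (0:ℝ)) (fun ω => ξ 0 ω)
      (fun n => (Measurable.ite (measurableSet_lt measurable_const (hmξ 0)) (hmξ 0)
        measurable_const).aestronglyMeasurable)
      hint
      (fun n => Filter.Eventually.of_forall fun ω => by
        split
        · rw [Real.norm_eq_abs, abs_of_nonneg (hpos 0 ω).le]
        · rw [norm_zero]; exact (hpos 0 ω).le)
      (Filter.Eventually.of_forall fun ω => by
        have hev : ∀ᶠ n : ℕ in atTop,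
            (fun _ => (0:ℝ)) n = (if (n:ℝ) < ξ 0 ω then ξ 0 ω else 0) := by
          filter_upwards [eventually_ge_atTop ⌈ξ 0 ω⌉₊] with n hn
          rw [if_neg]
          push_neg
          calc ξ 0 ω ≤ (⌈ξ 0 ω⌉₊ : ℝ) := Nat.le_ceil _
            _ ≤ (n : ℝ) := by exact_mod_cast hn
        exact tendsto_const_nhds.congr' hev)
    simpa using h
  have hminpos : 0 < min (m/2) (ε*m/24) := lt_min (by linarith) (by positivity)
  obtain ⟨L, hL1, hrfL⟩ : ∃ L : ℕ, 1 ≤ L ∧ rf (L:ℝ) < min (m/2) (ε*m/24) := by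
    have h1 := (hrtend.eventually (gt_mem_nhds hminpos)).and (eventually_ge_atTop 1)
    obtain ⟨L, hL⟩ := h1.exists
    exact ⟨L, hL.2, hL.1⟩
  have hL1' : (1:ℝ) ≤ (L:ℝ) := by exact_mod_cast hL1
  have hLpos : (0:ℝ) < (L:ℝ) := by linarith
  have hqL : m / 2 < qf (L:ℝ) := by
    have h1 : rf (L:ℝ) < m/2 := lt_of_lt_of_le hrfL (min_le_left _ _)
    have h2 := hsplit (L:ℝ)
    linarith
  have hqpos : 0 < qf (L:ℝ) := by linarith
  set Ccap : ℝ := 2 * (L:ℝ) / qf (L:ℝ) with hCcap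
  have hCpos : 0 < Ccap := div_pos (by linarith) hqpos
  set η : ℝ := (ε/6)/Ccap with hηdef
  have hηpos : 0 < η := div_pos (by linarith) hCpos
  obtain ⟨j, hj⟩ : ∃ j : ℕ, μ {ω | (j:ℝ) < |Y 0 ω|} < ENNReal.ofReal η := by
    have hmeas : ∀ j : ℕ, NullMeasurableSet {ω | (j:ℝ) < |Y 0 ω|} μ :=
      fun j => (measurableSet_lt measurable_const (hmY 0).abs).nullMeasurableSet
    have hanti : Antitone (fun j : ℕ => {ω | (j:ℝ) < |Y 0 ω|}) := by
      intro a b hab ω hω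
      simp only [Set.mem_setOf_eq] at hω ⊢
      have : (a:ℝ) ≤ (b:ℝ) := by exact_mod_cast hab
      linarith
    have hempty : (⋂ j : ℕ, {ω | (j:ℝ) < |Y 0 ω|}) = ∅ := by
      ext ω
      simp only [Set.mem_iInter, Set.mem_setOf_eq, Set.mem_empty_iff_false, iff_false]
      push_neg
      obtain ⟨j, hjj⟩ := exists_nat_gt |Y 0 ω|
      exact ⟨j, hjj.le⟩
    have htend := tendsto_measure_iInter_atTop hmeas hanti ⟨0, measure_ne_top μ _⟩
    rw [hempty] at htend
    simp only [measure_empty] at htend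
    exact ((tendsto_order.1 htend).2 _ (ENNReal.ofReal_pos.2 hηpos)).exists
  set c : ℝ := (j:ℝ) + 1 with hcdef
  have hc : μ {ω | c < |Y 0 ω|} < ENNReal.ofReal η := by
    refine lt_of_le_of_lt (measure_mono fun ω hω => ?_) hj
    simp only [Set.mem_setOf_eq] at hω ⊢
    linarith
  refine ⟨c, by positivity, fun t ht => ?_⟩
  set SK : ℕ → Set (ℝ × ℝ) := fun k => {p : ℝ × ℝ | (k:ℝ) * L < p.1 ∧ c < |p.2|}
    with hSK
  have hSKmeas : ∀ k, MeasurableSet (SK k) := fun k =>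
    (measurableSet_lt measurable_const measurable_fst).inter
      (measurableSet_lt measurable_const measurable_snd.abs)
  set g : ℕ → ℝ≥0∞ := fun k => μ ((fun ω => (ξ 0 ω, Y 0 ω)) ⁻¹' SK k) with hg
  set sk : ℕ → ℝ := fun k => t - ((k:ℝ) + 1) * L with hskdef
  set A : ℕ → ℕ → Set Ω := fun n k =>
    (fun ω => rT ξ n ω) ⁻¹' Set.Ioc (sk k) (sk k + L) with hAdef
  set B : ℕ → ℕ → Set Ω := fun n k => (fun ω => (ξ n ω, Y n ω)) ⁻¹' SK k with hBdef
  set E : ℕ → Set Ω := fun n =>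
    {ω | rT ξ n ω ≤ t ∧ t < rT ξ n ω + ξ n ω ∧ c < |Y n ω|} with hEdef
  set Bad : Set Ω := ⋂ n, {ω | rT ξ n ω ≤ t} with hBaddef
  have hsub1 : {ω | c < |Y (rN ξ t ω) ω|} ⊆ Bad ∪ ⋃ n, E n := by
    intro ω hω
    by_cases hb : ∀ n, rT ξ n ω ≤ t
    · exact Or.inl (Set.mem_iInter.2 hb)
    · push_neg at hb
      obtain ⟨n0, hn0⟩ := hb
      right
      have hne : {n : ℕ | rT ξ n ω ≤ t}.Nonempty :=
        ⟨0, show rT ξ 0 ω ≤ t by simpa [rT] using ht⟩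
      have hbdd : BddAbove {n : ℕ | rT ξ n ω ≤ t} := by
        refine ⟨n0, fun k hk => ?_⟩
        by_contra hkn
        push_neg at hkn
        have h1 := rT_mono hpos ω hkn.le
        simp only [Set.mem_setOf_eq] at hk
        simp only at h1
        linarith
      have hmem : rN ξ t ω ∈ {n : ℕ | rT ξ n ω ≤ t} := Nat.sSup_mem hne hbdd
      have hnotmem : (rN ξ t ω + 1) ∉ {n : ℕ | rT ξ n ω ≤ t} := by
        intro hmem1
        have h2 := le_csSup hbdd hmem1
        have : rN ξ t ω + 1 ≤ rN ξ t ω := h2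
        omega
      refine Set.mem_iUnion.2 ⟨rN ξ t ω, ?_⟩
      simp only [hEdef, Set.mem_setOf_eq]
      refine ⟨hmem, ?_, hω⟩
      have h3 : ¬ (rT ξ (rN ξ t ω + 1) ω ≤ t) := hnotmem
      rw [rT_succ] at h3
      linarith [not_le.1 h3]
  have hBadnull : μ Bad = 0 := by
    set L' : ℝ := max (t + 1) (L:ℝ) with hL'def
    have hL'pos : 0 < L' := lt_of_lt_of_le hLpos (le_max_right _ _)
    have hqmono : qf (L:ℝ) ≤ qf L' := by
      simp only [hqf]
      refine integral_mono (hIq _) (hIq _) (fun ω => ?_)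
      by_cases h1 : ξ 0 ω ≤ (L:ℝ)
      · rw [if_pos h1, if_pos (le_trans h1 (le_max_right _ _))]
      · rw [if_neg h1]
        split
        · exact (hpos 0 ω).le
        · exact le_rfl
    have hq' : (0:ℝ) < ∫ ω, (if ξ 0 ω ≤ L' then ξ 0 ω else 0) ∂μ :=
      lt_of_lt_of_le hqpos hqmono
    have hstar := star_bound hpos hm hindep hident hL'pos hq' (-1)
    have hfin : ∑' n, μ ((fun ω => rT ξ n ω) ⁻¹' Set.Ioc (-1) (-1 + L')) ≠ ∞ :=
      (lt_of_le_of_lt hstar ENNReal.ofReal_lt_top).ne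
    have htend0 := ENNReal.tendsto_atTop_zero_of_tsum_ne_top hfin
    have hsubBad : ∀ n, Bad ⊆ (fun ω => rT ξ n ω) ⁻¹' Set.Ioc (-1) (-1 + L') := by
      intro n ω hω
      have h1 : rT ξ n ω ≤ t := Set.mem_iInter.1 hω n
      simp only [Set.mem_preimage, Set.mem_Ioc]
      constructor
      · exact lt_of_lt_of_le (by norm_num) (rT_nonneg hpos n ω)
      · have h2 : t + 1 ≤ L' := le_max_left _ _
        linarith
    have hle0 : μ Bad ≤ 0 := ge_of_tendsto htend0
      (Filter.Eventually.of_forall fun n => measure_mono (hsubBad n))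
    exact le_antisymm hle0 zero_le
  have hsub3 : ∀ n, E n ⊆ ⋃ k, A n k ∩ B n k := by
    intro n ω hω
    simp only [hEdef, Set.mem_setOf_eq] at hω
    obtain ⟨h1, h2, h3⟩ := hω
    set k : ℕ := ⌊(t - rT ξ n ω) / L⌋₊ with hkdef
    have hk1 : (k:ℝ) * L ≤ t - rT ξ n ω := by
      rw [← le_div_iff₀ hLpos]
      exact Nat.floor_le (div_nonneg (by linarith) hLpos.le)
    have hk2 : t - rT ξ n ω < ((k:ℝ) + 1) * L := by
      rw [← div_lt_iff₀ hLpos]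
      exact Nat.lt_floor_add_one _
    have hexp : ((k:ℝ) + 1) * L = (k:ℝ) * L + L := by ring
    refine Set.mem_iUnion.2 ⟨k, ?_, ?_⟩
    · simp only [hAdef, Set.mem_preimage, Set.mem_Ioc, hskdef]
      constructor
      · linarith
      · linarith
    · simp only [hBdef, Set.mem_preimage, hSK, Set.mem_setOf_eq]
      exact ⟨by linarith, h3⟩
  have hE_bound : ∀ n, μ (E n) ≤ ∑' k, μ (A n k) * g k := by
    intro n
    calc μ (E n) ≤ μ (⋃ k, A n k ∩ B n k) := measure_mono (hsub3 n)
      _ ≤ ∑' k, μ (A n k ∩ B n k) := measure_iUnion_le _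
      _ = ∑' k, μ (A n k) * g k := by
          refine tsum_congr fun k => ?_
          simp only [hAdef, hBdef, hg]
          rw [(indep_T_pair hm hindep n).measure_inter_preimage_eq_mul _ _
            measurableSet_Ioc (hSKmeas k)]
          congr 1
          exact (hident n).measure_mem_eq (hSKmeas k)
  have hAk_bound : ∀ k, ∑' n, μ (A n k) ≤ ENNReal.ofReal Ccap := by
    intro k
    have h := star_bound hpos hm hindep hident hLpos hqpos (sk k)
    simpa [hAdef] using h
  have main : μ {ω | c < |Y (rN ξ t ω) ω|}
      ≤ ENNReal.ofReal Ccap * (ENNReal.ofReal η + ENNReal.ofReal (rf (L:ℝ) / L)) := by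
    calc μ {ω | c < |Y (rN ξ t ω) ω|}
        ≤ μ (Bad ∪ ⋃ n, E n) := measure_mono hsub1
      _ ≤ μ Bad + μ (⋃ n, E n) := measure_union_le _ _
      _ = μ (⋃ n, E n) := by rw [hBadnull, zero_add]
      _ ≤ ∑' n, μ (E n) := measure_iUnion_le _
      _ ≤ ∑' n, ∑' k, μ (A n k) * g k := ENNReal.tsum_le_tsum hE_bound
      _ = ∑' k, ∑' n, μ (A n k) * g k := ENNReal.tsum_comm
      _ = ∑' k, (∑' n, μ (A n k)) * g k := tsum_congr fun k => ENNReal.tsum_mul_right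
      _ ≤ ∑' k, ENNReal.ofReal Ccap * g k := ENNReal.tsum_le_tsum fun k =>
            mul_le_mul_left (hAk_bound k) _
      _ = ENNReal.ofReal Ccap * ∑' k, g k := ENNReal.tsum_mul_left
      _ ≤ _ := by
          refine mul_le_mul_right ?_ _
          rw [tsum_eq_zero_add' ENNReal.summable]
          refine add_le_add ?_ ?_
          · refine le_trans (measure_mono fun ω hω => ?_) hc.le
            exact hω.2
          · refine le_trans (ENNReal.tsum_le_tsum fun k => measure_mono
              fun ω hω => ?_) (tail_bound (hmξ 0) (hpos 0) hint hLpos)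
            have h4 := hω.1
            simp only [Set.mem_setOf_eq]
            push_cast at h4
            linarith
  refine lt_of_le_of_lt main ?_
  rw [← ENNReal.ofReal_add hηpos.le (div_nonneg (hrf_nonneg _) hLpos.le),
      ← ENNReal.ofReal_mul hCpos.le]
  rw [ENNReal.ofReal_lt_ofReal_iff hε]
  have h1 : Ccap * η = ε/6 := by
    rw [hηdef]
    field_simp
  have h2 : Ccap * (rf (L:ℝ) / L) ≤ 4 * rf (L:ℝ) / m := by
    have he : Ccap * (rf (L:ℝ) / L) = 2 * rf (L:ℝ) / qf (L:ℝ) := by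
      rw [hCcap]
      field_simp
    rw [he]
    calc 2 * rf (L:ℝ) / qf (L:ℝ) ≤ 2 * rf (L:ℝ) / (m/2) :=
          div_le_div_of_nonneg_left (by linarith [hrf_nonneg (L:ℝ)]) (by linarith) hqL.le
      _ = 4 * rf (L:ℝ) / m := by
          field_simp
          ring
  have h3 : 4 * rf (L:ℝ) / m < ε/6 := by
    have hr2 : rf (L:ℝ) < ε * m / 24 := lt_of_lt_of_le hrfL (min_le_right _ _)
    rw [div_lt_iff₀ hmpos]
    nlinarith
  have hexp2 : Ccap * (η + rf (L:ℝ) / L) = Ccap * η + Ccap * (rf (L:ℝ) / L) := by ring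
  linarith

lemma iIndep_congr {μ : Measure Ω} [IsProbabilityMeasure μ] {f g : ℕ → Ω → ℝ × ℝ}
    (h : iIndepFun f μ) (he : ∀ n, f n =ᵐ[μ] g n) :
    iIndepFun g μ := by
  rw [iIndepFun_iff_measure_inter_preimage_eq_mul] at h ⊢
  intro S sets hsets
  have key : ∀ (s : Set (ℝ × ℝ)) (n : ℕ), μ (g n ⁻¹' s) = μ (f n ⁻¹' s) := by
    intro s n
    refine measure_congr ((he n).mono fun ω hω => ?_)
    have : (ω ∈ g n ⁻¹' s) = (ω ∈ f n ⁻¹' s) := by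
      simp only [Set.mem_preimage, hω]
    exact this
  have hsect : μ (⋂ i ∈ S, g i ⁻¹' sets i) = μ (⋂ i ∈ S, f i ⁻¹' sets i) := by
    refine measure_congr ((ae_all_iff.2 he).mono fun ω hω => ?_)
    have : (ω ∈ ⋂ i ∈ S, g i ⁻¹' sets i) = (ω ∈ ⋂ i ∈ S, f i ⁻¹' sets i) := by
      simp only [Set.mem_iInter, Set.mem_preimage]
      rw [eq_iff_iff]
      constructor
      · intro hmem i hi
        rw [hω i]; exact hmem i hi
      · intro hmem i hi
        rw [← hω i]; exact hmem i hi
    exact this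
  rw [hsect, h S hsets]
  exact Finset.prod_congr rfl fun i _ => (key (sets i) i).symm


/-- tightness of `{Y_{N(t)+1} : t ≥ 0}` for i.i.d. pairs `(ξ_i, Y_i)` with
`ξ_1 > 0` and `E[ξ_1] < ∞`. (Lean index `n` corresponds to math index `n+1`, so
`Y_{N(t)+1}` is `Y (rN ξ t ω) ω`.) -/
theorem stmt0 (μ : Measure Ω) [IsProbabilityMeasure μ] (ξ Y : ℕ → Ω → ℝ)
    (hpos : ∀ n ω, 0 < ξ n ω)
    (hindep : iIndepFun (fun n ω => (ξ n ω, Y n ω)) μ)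
    (hident : ∀ n, IdentDistrib (fun ω => (ξ n ω, Y n ω)) (fun ω => (ξ 0 ω, Y 0 ω)) μ μ)
    (hint : Integrable (ξ 0) μ) :
    ∀ ε > (0:ℝ), ∃ c > (0:ℝ), ∀ t ≥ (0:ℝ),
      μ {ω | c < |Y (rN ξ t ω) ω|} < ENNReal.ofReal ε := by
  classical
  intro ε hε
  have hPm : ∀ n, AEMeasurable (fun ω => (ξ n ω, Y n ω)) μ :=
    fun n => (hident n).aemeasurable_fst
  set pm : ℕ → Ω → ℝ × ℝ := fun n => (hPm n).mk _ with hpmdef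
  have hpm_meas : ∀ n, Measurable (pm n) := fun n => (hPm n).measurable_mk
  have hpm_ae : ∀ n, (fun ω => (ξ n ω, Y n ω)) =ᵐ[μ] pm n := fun n => (hPm n).ae_eq_mk
  set ξ' : ℕ → Ω → ℝ := fun n ω => if 0 < (pm n ω).1 then (pm n ω).1 else 1 with hξ'def
  set Y' : ℕ → Ω → ℝ := fun n ω => (pm n ω).2 with hY'def
  have hm' : ∀ n, Measurable (fun ω => (ξ' n ω, Y' n ω)) := by
    intro n
    refine Measurable.prodMk ?_ ((hpm_meas n).snd)
    exact Measurable.ite (measurableSet_lt measurable_const ((hpm_meas n).fst))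
      ((hpm_meas n).fst) measurable_const
  have hae : ∀ n, ∀ᵐ ω ∂μ, ξ n ω = ξ' n ω ∧ Y n ω = Y' n ω := by
    intro n
    refine (hpm_ae n).mono fun ω h => ?_
    have h1 : ξ n ω = (pm n ω).1 := congrArg Prod.fst h
    have h2 : Y n ω = (pm n ω).2 := congrArg Prod.snd h
    constructor
    · simp only [hξ'def]
      rw [← h1, if_pos (hpos n ω)]
    · simp only [hY'def]
      exact h2
  have hpos' : ∀ n ω, 0 < ξ' n ω := by
    intro n ω
    simp only [hξ'def]
    split
    · assumption
    · exact one_pos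
  have hpair_ae : ∀ n, (fun ω => (ξ n ω, Y n ω)) =ᵐ[μ] (fun ω => (ξ' n ω, Y' n ω)) := by
    intro n
    refine (hae n).mono fun ω h => ?_
    show (ξ n ω, Y n ω) = (ξ' n ω, Y' n ω)
    rw [h.1, h.2]
  have hindep' : iIndepFun (fun n ω => (ξ' n ω, Y' n ω)) μ :=
    iIndep_congr hindep hpair_ae
  have hident' : ∀ n, IdentDistrib (fun ω => (ξ' n ω, Y' n ω))
      (fun ω => (ξ' 0 ω, Y' 0 ω)) μ μ := by
    intro n
    exact ⟨(hm' n).aemeasurable, (hm' 0).aemeasurable, by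
      rw [← Measure.map_congr (hpair_ae n), ← Measure.map_congr (hpair_ae 0)]
      exact (hident n).map_eq⟩
  have hint' : Integrable (ξ' 0) μ := hint.congr ((hae 0).mono fun ω h => h.1)
  obtain ⟨c, hcpos, H⟩ := core ξ' Y' hpos' hm' hindep' hident' hint' ε hε
  refine ⟨c, hcpos, fun t ht => ?_⟩
  set Nset : Set Ω := ⋃ n, {ω | ¬ (ξ n ω = ξ' n ω ∧ Y n ω = Y' n ω)} with hNdef
  have hN : μ Nset = 0 := measure_iUnion_null fun n => ae_iff.1 (hae n)
  have hsub : {ω | c < |Y (rN ξ t ω) ω|} ⊆ {ω | c < |Y' (rN ξ' t ω) ω|} ∪ Nset := by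
    intro ω hω
    by_cases hNm : ω ∈ Nset
    · exact Or.inr hNm
    · left
      have hall : ∀ n, ξ n ω = ξ' n ω ∧ Y n ω = Y' n ω := by
        intro n
        by_contra hcon
        exact hNm (Set.mem_iUnion.2 ⟨n, hcon⟩)
      have hT : ∀ n, rT ξ n ω = rT ξ' n ω :=
        fun n => Finset.sum_congr rfl fun i _ => (hall i).1
      have hNeq : rN ξ t ω = rN ξ' t ω := by
        unfold rN
        congr 1
        ext n
        simp only [Set.mem_setOf_eq, hT n]
      simp only [Set.mem_setOf_eq] at hω ⊢
      rw [← hNeq, ← (hall (rN ξ t ω)).2]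
      exact hω
  calc μ {ω | c < |Y (rN ξ t ω) ω|}
      ≤ μ ({ω | c < |Y' (rN ξ' t ω) ω|} ∪ Nset) := measure_mono hsub
    _ ≤ μ {ω | c < |Y' (rN ξ' t ω) ω|} + μ Nset := measure_union_le _ _
    _ = μ {ω | c < |Y' (rN ξ' t ω) ω|} := by rw [hN, add_zero]
    _ < ENNReal.ofReal ε := H t ht

end
end

section
/- Let α > 1 and β > 0 with 1 + β − α < 1, let ξ_i be i.i.d. Pareto with P(ξ_1 > t) = t^{−α} for t ≥ 1, T_n = Σ_{i=1}^n ξ_i, N(t) = max{n : T_n ≤ t}, τ(t) = N(t)+1, and Z(t) = ξ_{τ(t)}^β · 1{t ≥ T_{N(t)} + 1}. Then Z has regenerative increments over T_n with Z(T_n) = 0 for all n (hence a = 0), and there exists c > 0 such that E[Z(t)] > c·t^{1+β−α} for all t ≥ 1; in particular E[Z(t)] = o(t^r) fails for r = 1 + β − α. -/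
open MeasureTheory ProbabilityTheory Filter Set Topology
open scoped ENNReal NNReal

noncomputable section

variable {Ω : Type*} [MeasurableSpace Ω]

set_option linter.unusedSectionVars false
set_option linter.unusedVariables false

namespace Stmt17

variable {ξ : ℕ → Ω → ℝ} {Z : ℝ → Ω → ℝ} {β : ℝ} {ω : Ω}

lemma rT_zero : rT ξ 0 ω = 0 := by simp [rT]

lemma rT_succ (n : ℕ) : rT ξ (n + 1) ω = rT ξ n ω + ξ n ω := by
  simp [rT, Finset.sum_range_succ]

lemma rT_mono (h1 : ∀ i, 1 ≤ ξ i ω) {m n : ℕ} (h : m ≤ n) : rT ξ m ω ≤ rT ξ n ω :=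
  Finset.sum_le_sum_of_subset_of_nonneg (Finset.range_subset_range.2 h)
    (fun i _ _ => le_trans zero_le_one (h1 i))

lemma rT_add_one_le (h1 : ∀ i, 1 ≤ ξ i ω) {m n : ℕ} (h : m < n) :
    rT ξ m ω + 1 ≤ rT ξ n ω := by
  have h2 : rT ξ m ω + 1 ≤ rT ξ (m + 1) ω := by
    rw [rT_succ]; linarith [h1 m]
  exact h2.trans (rT_mono h1 h)

lemma nat_le_rT (h1 : ∀ i, 1 ≤ ξ i ω) (n : ℕ) : (n : ℝ) ≤ rT ξ n ω := by
  have := Finset.sum_le_sum (s := Finset.range n) (f := fun _ => (1 : ℝ))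
    (g := fun i => ξ i ω) (fun i _ => h1 i)
  simpa [rT] using this

lemma rT_nonneg (h1 : ∀ i, 1 ≤ ξ i ω) (n : ℕ) : 0 ≤ rT ξ n ω :=
  le_trans (by positivity) (nat_le_rT h1 n)

lemma setN_nonempty {t : ℝ} (ht : 0 ≤ t) : {n : ℕ | rT ξ n ω ≤ t}.Nonempty :=
  ⟨0, by simpa [rT_zero] using ht⟩

lemma setN_bdd (h1 : ∀ i, 1 ≤ ξ i ω) {t : ℝ} : BddAbove {n : ℕ | rT ξ n ω ≤ t} :=
  ⟨Nat.floor t, fun n hn => Nat.le_floor ((nat_le_rT h1 n).trans hn)⟩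

lemma rT_rN_le (h1 : ∀ i, 1 ≤ ξ i ω) {t : ℝ} (ht : 0 ≤ t) : rT ξ (rN ξ t ω) ω ≤ t :=
  Nat.sSup_mem (setN_nonempty ht) (setN_bdd h1)

lemma lt_rT_rN_succ (h1 : ∀ i, 1 ≤ ξ i ω) {t : ℝ} (ht : 0 ≤ t) :
    t < rT ξ (rN ξ t ω + 1) ω := by
  by_contra h
  push_neg at h
  have hmem : rN ξ t ω + 1 ∈ {n : ℕ | rT ξ n ω ≤ t} := h
  exact Nat.not_succ_le_self _ (le_csSup (setN_bdd h1) hmem)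

lemma rN_eq (h1 : ∀ i, 1 ≤ ξ i ω) {n : ℕ} {s : ℝ} (hs : 0 ≤ s) (hs' : s < ξ n ω) :
    rN ξ (rT ξ n ω + s) ω = n := by
  have hset : {m : ℕ | rT ξ m ω ≤ rT ξ n ω + s} = Set.Iic n := by
    ext m
    simp only [Set.mem_setOf_eq, Set.mem_Iic]
    constructor
    · intro h
      by_contra hm
      push_neg at hm
      have h2 : rT ξ (n + 1) ω ≤ rT ξ m ω := rT_mono h1 hm
      rw [rT_succ] at h2
      linarith
    · intro h
      linarith [rT_mono h1 h]
  rw [rN, hset, csSup_Iic]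


def pg (β : ℝ) : ℝ → ℝ × (ℝ → ℝ) :=
  fun x => (x, fun s => if 1 ≤ s ∧ s < x then x ^ β else 0)

lemma measurable_pg (hβ : 0 ≤ β) : Measurable (pg β) := by
  refine measurable_id.prodMk (measurable_pi_lambda _ fun s => ?_)
  by_cases hs : (1 : ℝ) ≤ s
  · simp only [hs, true_and]
    exact Measurable.ite measurableSet_Ioi
      (Real.continuous_rpow_const hβ).measurable measurable_const
  · simp [hs]

variable (hZ : ∀ t ω, Z t ω =
      (ξ (rN ξ t ω) ω) ^ β * (if rT ξ (rN ξ t ω) ω + 1 ≤ t then 1 else 0))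
include hZ

lemma Z_lt_one (h1 : ∀ i, 1 ≤ ξ i ω) {u : ℝ} (hu : u < 1) : Z u ω = 0 := by
  rw [hZ, if_neg, mul_zero]
  push_neg
  linarith [rT_nonneg h1 (rN ξ u ω)]

lemma Z_eval (h1 : ∀ i, 1 ≤ ξ i ω) {n : ℕ} {s : ℝ} (hs : 0 ≤ s) (hs' : s < ξ n ω) :
    Z (rT ξ n ω + s) ω = if 1 ≤ s then (ξ n ω) ^ β else 0 := by
  rw [hZ, rN_eq h1 hs hs']
  by_cases h : (1 : ℝ) ≤ s
  · rw [if_pos (by linarith), if_pos h, mul_one]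
  · rw [if_neg (by push_neg at h ⊢; linarith), if_neg h, mul_zero]

lemma Z_rT (h1 : ∀ i, 1 ≤ ξ i ω) (n : ℕ) : Z (rT ξ n ω) ω = 0 := by
  have := Z_eval (s := 0) hZ h1 le_rfl (by linarith [h1 n])
  rw [add_zero] at this
  rw [this, if_neg (by norm_num)]


lemma rIncr_eq (h1 : ∀ i, 1 ≤ ξ i ω) : rIncr ξ Z n ω = pg β (ξ n ω) := by
  refine Prod.ext rfl (funext fun s => ?_)
  have hx : (1 : ℝ) ≤ ξ n ω := h1 n
  show Z (min (max s 0) (ξ n ω) + rT ξ n ω) ω - Z (rT ξ n ω) ω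
      = if 1 ≤ s ∧ s < ξ n ω then (ξ n ω) ^ β else 0
  rw [Z_rT hZ h1, sub_zero]
  rcases lt_or_ge s 1 with h | h
  · have hcl : min (max s 0) (ξ n ω) < 1 := lt_of_le_of_lt (min_le_left _ _)
      (by rcases le_total s 0 with h' | h' <;> simp [max_eq_left, max_eq_right, h'] <;> linarith)
    rw [add_comm, Z_eval hZ h1 (le_min (le_max_right _ _) (by linarith)) (lt_of_lt_of_le hcl hx),
      if_neg (by linarith), if_neg (by rintro ⟨h', -⟩; linarith)]
  · rcases lt_or_ge s (ξ n ω) with h' | h'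
    · have hcl : min (max s 0) (ξ n ω) = s := by
        rw [max_eq_left (by linarith), min_eq_left (by linarith)]
      rw [hcl, add_comm, Z_eval hZ h1 (by linarith) h', if_pos h, if_pos ⟨h, h'⟩]
    · have hcl : min (max s 0) (ξ n ω) = ξ n ω := by
        rw [max_eq_left (by linarith), min_eq_right h']
      rw [hcl, add_comm, ← rT_succ, Z_rT hZ h1, if_neg (by rintro ⟨-, h''⟩; linarith)]

lemma Z_right_const (h1 : ∀ i, 1 ≤ ξ i ω) (t : ℝ) :
    ∃ ε > (0:ℝ), ∀ u, t ≤ u → u < t + ε → Z u ω = Z t ω := by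
  rcases lt_or_ge t 1 with ht | ht
  · exact ⟨1 - t, by linarith, fun u hu hu' =>
      by rw [Z_lt_one hZ h1 (by linarith), Z_lt_one hZ h1 ht]⟩
  · have ht0 : (0:ℝ) ≤ t := by linarith
    set n := rN ξ t ω with hn
    have hn1 : rT ξ n ω ≤ t := rT_rN_le h1 ht0
    have hn2 : t < rT ξ (n + 1) ω := lt_rT_rN_succ h1 ht0
    have hsucc : rT ξ (n + 1) ω = rT ξ n ω + ξ n ω := rT_succ n
    have heval : ∀ u : ℝ, rT ξ n ω ≤ u → u < rT ξ (n + 1) ω →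
        Z u ω = if 1 ≤ u - rT ξ n ω then (ξ n ω) ^ β else 0 := by
      intro u h h'
      have := Z_eval hZ h1 (s := u - rT ξ n ω) (by linarith) (by rw [hsucc] at h'; linarith)
      rwa [add_sub_cancel] at this
    rcases le_or_gt (rT ξ n ω + 1) t with h2 | h2
    · refine ⟨rT ξ (n + 1) ω - t, by linarith, fun u hu hu' => ?_⟩
      rw [heval u (by linarith) (by linarith), heval t hn1 hn2,
        if_pos (by linarith), if_pos (by linarith)]
    · refine ⟨rT ξ n ω + 1 - t, by linarith, fun u hu hu' => ?_⟩
      have hle : rT ξ n ω + 1 ≤ rT ξ (n + 1) ω := by rw [hsucc]; linarith [h1 n]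
      rw [heval u (by linarith) (by linarith), heval t hn1 hn2,
        if_neg (by push_neg; linarith), if_neg (by push_neg; linarith)]

lemma Z_left_const (h1 : ∀ i, 1 ≤ ξ i ω) {t : ℝ} (ht : 0 < t) :
    ∃ l : ℝ, ∃ ε > (0:ℝ), ∀ u, t - ε < u → u < t → Z u ω = l := by
  rcases le_or_gt t 1 with ht1 | ht1
  · exact ⟨0, t, ht, fun u _ hu' => Z_lt_one hZ h1 (by linarith)⟩
  · have ht0 : (0:ℝ) ≤ t := by linarith
    obtain ⟨n, hn1, hn2⟩ : ∃ n, rT ξ n ω < t ∧ t ≤ rT ξ (n + 1) ω := by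
      set m := rN ξ t ω with hm
      have h1' : rT ξ m ω ≤ t := rT_rN_le h1 ht0
      have h2' : t < rT ξ (m + 1) ω := lt_rT_rN_succ h1 ht0
      rcases lt_or_eq_of_le h1' with h | h
      · exact ⟨m, h, h2'.le⟩
      · have hm0 : m ≠ 0 := by
          intro h0
          rw [h0, rT_zero] at h
          linarith
        obtain ⟨k, hk⟩ := Nat.exists_eq_succ_of_ne_zero hm0
        rw [hk] at h
        exact ⟨k, by linarith [rT_add_one_le h1 (Nat.lt_succ_self k)], h.ge⟩
    have hsucc : rT ξ (n + 1) ω = rT ξ n ω + ξ n ω := rT_succ n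
    have heval : ∀ u : ℝ, rT ξ n ω ≤ u → u < rT ξ (n + 1) ω →
        Z u ω = if 1 ≤ u - rT ξ n ω then (ξ n ω) ^ β else 0 := by
      intro u h h'
      have := Z_eval hZ h1 (s := u - rT ξ n ω) (by linarith) (by rw [hsucc] at h'; linarith)
      rwa [add_sub_cancel] at this
    rcases lt_or_ge (rT ξ n ω + 1) t with h2 | h2
    · refine ⟨(ξ n ω) ^ β, t - (rT ξ n ω + 1), by linarith, fun u hu hu' => ?_⟩
      rw [heval u (by linarith) (by linarith), if_pos (by linarith)]
    · refine ⟨0, t - rT ξ n ω, by linarith, fun u hu hu' => ?_⟩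
      rw [heval u (by linarith) (by linarith), if_neg (by push_neg; linarith)]

end Stmt17

/-- sharpness example: i.i.d. Pareto interarrival times with tail `t^{−α}`
(`α > 1`), and `Z(t) = ξ_{τ(t)}^β · 1{t ≥ T_{N(t)} + 1}`. Then `Z` has regenerative
increments over `T_n`, vanishes at the renewal times (so `a = 0`), and
`E[Z(t)] > c t^{1+β−α}` for some `c > 0` and all `t ≥ 1` (stated via the lower Lebesgue
integral, since `E[Z(t)]` may be infinite). -/
theorem stmt17 (μ : Measure Ω) [IsProbabilityMeasure μ] (ξ : ℕ → Ω → ℝ) (Z : ℝ → Ω → ℝ)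
    (α β : ℝ) (hα : 1 < α) (hβ : 0 < β) (hrange : 1 + β - α < 1)
    (hindep : iIndepFun ξ μ)
    (hident : ∀ n, IdentDistrib (ξ n) (ξ 0) μ μ)
    (hone : ∀ n ω, 1 ≤ ξ n ω)
    (hpareto : ∀ t ≥ (1:ℝ), μ {ω | t < ξ 0 ω} = ENNReal.ofReal (t ^ (-α)))
    (hZ : ∀ t ω, Z t ω =
      (ξ (rN ξ t ω) ω) ^ β * (if rT ξ (rN ξ t ω) ω + 1 ≤ t then 1 else 0)) :
    RegenIncrements μ ξ Z ∧ (∀ n ω, Z (rT ξ n ω) ω = 0) ∧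
      ∃ c > (0:ℝ), ∀ t ≥ (1:ℝ),
        ENNReal.ofReal (c * t ^ (1 + β - α)) < ∫⁻ ω, ENNReal.ofReal (Z t ω) ∂μ := by
  have hβ' : (0:ℝ) ≤ β := hβ.le
  have h1 : ∀ ω i, 1 ≤ ξ i ω := fun ω i => hone i ω
  have hIncrEq : rIncr ξ Z = fun n ω => Stmt17.pg β (ξ n ω) :=
    funext fun n => funext fun ω => Stmt17.rIncr_eq hZ (h1 ω)
  refine ⟨⟨fun n ω => lt_of_lt_of_le zero_lt_one (hone n ω),
    fun ω => Stmt17.Z_lt_one hZ (h1 ω) zero_lt_one, ?_, ?_, ?_, ?_⟩,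
    fun n ω => Stmt17.Z_rT hZ (h1 ω) n, ?_⟩
  · intro ω t
    obtain ⟨ε, hε, hc⟩ := Stmt17.Z_right_const hZ (h1 ω) t
    have hmem : Set.Ico t (t + ε) ∈ nhdsWithin t (Set.Ici t) := by
      rw [← Set.Ici_inter_Iio]
      exact Filter.inter_mem self_mem_nhdsWithin
        (mem_nhdsWithin_of_mem_nhds (Iio_mem_nhds (by linarith)))
    exact Filter.Tendsto.congr'
      (by filter_upwards [hmem] with u hu using (hc u hu.1 hu.2).symm) tendsto_const_nhds
  · intro ω t ht
    obtain ⟨l, ε, hε, hc⟩ := Stmt17.Z_left_const hZ (h1 ω) ht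
    refine ⟨l, ?_⟩
    have hmem : Set.Ioo (t - ε) t ∈ nhdsWithin t (Set.Iio t) := by
      rw [← Set.Ioi_inter_Iio]
      exact Filter.inter_mem
        (mem_nhdsWithin_of_mem_nhds (Ioi_mem_nhds (by linarith))) self_mem_nhdsWithin
    exact Filter.Tendsto.congr'
      (by filter_upwards [hmem] with u hu using (hc u hu.1 hu.2).symm) tendsto_const_nhds
  · rw [hIncrEq]
    exact hindep.comp (fun _ => Stmt17.pg β) (fun _ => Stmt17.measurable_pg hβ')
  · intro n
    rw [hIncrEq]
    exact (hident n).comp (Stmt17.measurable_pg hβ')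
  · -- Part 3: the lower bound on the mean
    classical
    have hηm0 : ∀ n, AEMeasurable (ξ n) μ := fun n => (hident n).aemeasurable_fst
    set η : ℕ → Ω → ℝ := fun n => (hηm0 n).mk (ξ n) with hηdef
    have hηm : ∀ n, Measurable (η n) := fun n => (hηm0 n).measurable_mk
    have hηae : ∀ n, ξ n =ᵐ[μ] η n := fun n => (hηm0 n).ae_eq_mk
    have hE : ∀ᵐ ω ∂μ, ∀ i, ξ i ω = η i ω := ae_all_iff.2 hηae
    obtain ⟨S, hSm, hSsub, hSnull⟩ :
        ∃ S : Set Ω, MeasurableSet S ∧ S ⊆ {ω | ∀ i, ξ i ω = η i ω} ∧ μ Sᶜ = 0 := by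
      obtain ⟨N, hN1, hN2, hN3⟩ := exists_measurable_superset_of_null (ae_iff.1 hE)
      refine ⟨Nᶜ, hN2.compl, fun ω hω => ?_, by rwa [compl_compl]⟩
      by_contra h
      exact hω (hN1 h)
    have hSae : ∀ᵐ ω ∂μ, ω ∈ S := by
      rw [ae_iff]
      exact hSnull
    -- independence transfers to the measurable modification
    have hηindep : iIndepFun η μ := by
      rw [iIndepFun_iff_measure_inter_preimage_eq_mul]
      intro s sets hsets
      have hbase := (iIndepFun_iff_measure_inter_preimage_eq_mul.1 hindep) s hsets
      have hpre : ∀ i, μ (ξ i ⁻¹' sets i) = μ (η i ⁻¹' sets i) := fun i =>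
        measure_congr (Filter.eventuallyEq_set.2 (by
          filter_upwards [hηae i] with ω hω
          simp [Set.mem_preimage, hω]))
      calc μ (⋂ i ∈ s, η i ⁻¹' sets i) = μ (⋂ i ∈ s, ξ i ⁻¹' sets i) := by
            refine measure_congr (Filter.eventuallyEq_set.2 ?_)
            filter_upwards [hE] with ω hω
            simp only [Set.mem_iInter, Set.mem_preimage]
            exact forall₂_congr fun i _ => by rw [hω i]
        _ = ∏ i ∈ s, μ (ξ i ⁻¹' sets i) := hbase
        _ = ∏ i ∈ s, μ (η i ⁻¹' sets i) := Finset.prod_congr rfl fun i _ => hpre i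
    -- finite mean of the interarrival times
    have hξ0nn : 0 ≤ᵐ[μ] ξ 0 := ae_of_all _ fun ω => le_trans zero_le_one (hone 0 ω)
    set M : ℝ≥0∞ := ∫⁻ ω, ENNReal.ofReal (ξ 0 ω) ∂μ with hMdef
    have hMfin : M < ⊤ := by
      rw [hMdef, lintegral_eq_lintegral_meas_lt μ hξ0nn (hηm0 0)]
      rw [show Set.Ioi (0:ℝ) = Set.Ioc 0 1 ∪ Set.Ioi 1 from
        (Set.Ioc_union_Ioi_eq_Ioi zero_le_one).symm]
      rw [lintegral_union measurableSet_Ioi (Set.Ioc_disjoint_Ioi le_rfl)]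
      have hb1 : ∫⁻ t in Set.Ioc (0:ℝ) 1, μ {a | t < ξ 0 a} ≤ 1 := by
        calc ∫⁻ t in Set.Ioc (0:ℝ) 1, μ {a | t < ξ 0 a}
            ≤ ∫⁻ _ in Set.Ioc (0:ℝ) 1, 1 := lintegral_mono fun t => prob_le_one
          _ = 1 := by simp [Real.volume_Ioc]
      have hb2 : ∫⁻ t in Set.Ioi (1:ℝ), μ {a | t < ξ 0 a} < ⊤ := by
        have heq : ∫⁻ t in Set.Ioi (1:ℝ), μ {a | t < ξ 0 a}
            = ∫⁻ t in Set.Ioi (1:ℝ), ENNReal.ofReal (t ^ (-α)) := by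
          refine setLIntegral_congr_fun measurableSet_Ioi (fun t ht => ?_)
          exact hpareto t (le_of_lt ht)
        rw [heq]
        have hint : IntegrableOn (fun t : ℝ => t ^ (-α)) (Set.Ioi 1) :=
          integrableOn_Ioi_rpow_of_lt (by linarith) one_pos
        calc ∫⁻ t in Set.Ioi (1:ℝ), ENNReal.ofReal (t ^ (-α))
            ≤ ∫⁻ t in Set.Ioi (1:ℝ), ‖(t:ℝ) ^ (-α)‖ₑ :=
              lintegral_mono fun t => Real.ofReal_le_enorm _
          _ < ⊤ := hint.2
      exact ENNReal.add_lt_top.2 ⟨lt_of_le_of_lt hb1 ENNReal.one_lt_top, hb2⟩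
    set m0 : ℝ := max 1 M.toReal with hm0def
    have hm01 : (1:ℝ) ≤ m0 := le_max_left _ _
    have hm0pos : (0:ℝ) < m0 := by linarith
    have hMle : M ≤ ENNReal.ofReal m0 := by
      rw [← ENNReal.ofReal_toReal hMfin.ne]
      exact ENNReal.ofReal_le_ofReal (le_max_right _ _)
    have hηint : ∀ i, ∫⁻ ω, ENNReal.ofReal (η i ω) ∂μ = M := by
      intro i
      have h1' : ∫⁻ ω, ENNReal.ofReal (η i ω) ∂μ = ∫⁻ ω, ENNReal.ofReal (ξ i ω) ∂μ :=
        lintegral_congr_ae (by filter_upwards [hηae i] with ω hω; rw [hω])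
      rw [h1', hMdef]
      exact ((hident i).comp ENNReal.measurable_ofReal).lintegral_eq
    -- Markov inequality
    have hmarkov : ∀ (n : ℕ) (t : ℝ), 1 ≤ t → (n : ℝ) * m0 ≤ (t - 1) / 2 →
        ENNReal.ofReal (1/2) ≤ μ {ω | (∑ i ∈ Finset.range n, η i ω) ≤ t - 1} := by
      intro n t ht hn
      have hmeas : Measurable fun ω => ∑ i ∈ Finset.range n, η i ω :=
        Finset.measurable_sum _ fun i _ => hηm i
      have hupper : μ {ω | t - 1 < ∑ i ∈ Finset.range n, η i ω} ≤ ENNReal.ofReal (1/2) := by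
        rcases Nat.eq_zero_or_pos n with rfl | hn0
        · have hempty : {ω : Ω | t - 1 < ∑ i ∈ Finset.range 0, η i ω} = ∅ := by
            ext ω
            simp only [Finset.range_zero, Finset.sum_empty, Set.mem_setOf_eq,
              Set.mem_empty_iff_false, iff_false, not_lt]
            linarith
          rw [hempty]
          simp
        · have hn1 : (1:ℝ) ≤ (n:ℝ) := by exact_mod_cast hn0
          have htt : (0:ℝ) < t - 1 := by nlinarith
          have hsum : ∫⁻ ω, ENNReal.ofReal (∑ i ∈ Finset.range n, η i ω) ∂μ
              ≤ (n : ℝ≥0∞) * M := by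
            have heq : ∫⁻ ω, ENNReal.ofReal (∑ i ∈ Finset.range n, η i ω) ∂μ
                = ∫⁻ ω, ∑ i ∈ Finset.range n, ENNReal.ofReal (η i ω) ∂μ :=
              lintegral_congr_ae (by
                filter_upwards [hE] with ω hω
                rw [ENNReal.ofReal_sum_of_nonneg]
                intro i _
                rw [← hω i]
                linarith [hone i ω])
            rw [heq, lintegral_finset_sum _ fun i _ => (hηm i).ennreal_ofReal]
            simp only [hηint, Finset.sum_const, Finset.card_range, nsmul_eq_mul]
            exact le_rfl
          have hintle : ∫⁻ ω, ENNReal.ofReal (∑ i ∈ Finset.range n, η i ω) ∂μ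
              ≤ ENNReal.ofReal ((t-1)/2) := by
            calc ∫⁻ ω, ENNReal.ofReal (∑ i ∈ Finset.range n, η i ω) ∂μ
                ≤ (n : ℝ≥0∞) * M := hsum
              _ ≤ ENNReal.ofReal ((n:ℝ) * m0) := by
                  rw [ENNReal.ofReal_mul (by positivity), ENNReal.ofReal_natCast]
                  exact mul_le_mul_right hMle _
              _ ≤ ENNReal.ofReal ((t-1)/2) := ENNReal.ofReal_le_ofReal hn
          have hmark := mul_meas_ge_le_lintegral₀ (μ := μ)
            (ENNReal.measurable_ofReal.comp hmeas).aemeasurable (ENNReal.ofReal (t-1))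
          have hsub : μ {ω | t - 1 < ∑ i ∈ Finset.range n, η i ω}
              ≤ μ {ω | ENNReal.ofReal (t-1)
                  ≤ ENNReal.ofReal (∑ i ∈ Finset.range n, η i ω)} :=
            measure_mono fun ω hω => ENNReal.ofReal_le_ofReal (le_of_lt hω)
          have hdiv : μ {ω | ENNReal.ofReal (t-1)
                ≤ ENNReal.ofReal (∑ i ∈ Finset.range n, η i ω)}
              ≤ (∫⁻ ω, ENNReal.ofReal (∑ i ∈ Finset.range n, η i ω) ∂μ)
                / ENNReal.ofReal (t-1) := by
            rw [ENNReal.le_div_iff_mul_le (Or.inl (ne_of_gt (ENNReal.ofReal_pos.2 htt)))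
              (Or.inl ENNReal.ofReal_ne_top), mul_comm]
            exact hmark
          have hfinal : (ENNReal.ofReal ((t-1)/2)) / ENNReal.ofReal (t-1)
              = ENNReal.ofReal (1/2) := by
            rw [← ENNReal.ofReal_div_of_pos htt]
            congr 1
            have hne : t - 1 ≠ 0 := ne_of_gt htt
            field_simp
          calc μ {ω | t - 1 < ∑ i ∈ Finset.range n, η i ω}
              ≤ (∫⁻ ω, ENNReal.ofReal (∑ i ∈ Finset.range n, η i ω) ∂μ)
                / ENNReal.ofReal (t-1) := le_trans hsub hdiv
            _ ≤ (ENNReal.ofReal ((t-1)/2)) / ENNReal.ofReal (t-1) :=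
                ENNReal.div_le_div_right hintle _
            _ = ENNReal.ofReal (1/2) := hfinal
      have hcompl : {ω | (∑ i ∈ Finset.range n, η i ω) ≤ t - 1}
          = {ω | t - 1 < ∑ i ∈ Finset.range n, η i ω}ᶜ := by
        ext ω
        simp [not_lt]
      rw [hcompl, prob_compl_eq_one_sub (measurableSet_lt measurable_const hmeas)]
      have hadd : ENNReal.ofReal (1/2) + μ {ω | t - 1 < ∑ i ∈ Finset.range n, η i ω} ≤ 1 := by
        calc ENNReal.ofReal (1/2) + μ {ω | t - 1 < ∑ i ∈ Finset.range n, η i ω}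
            ≤ ENNReal.ofReal (1/2) + ENNReal.ofReal (1/2) := add_le_add le_rfl hupper
          _ = 1 := by rw [← ENNReal.ofReal_add (by norm_num) (by norm_num)]; norm_num
      exact ENNReal.le_sub_of_add_le_right (measure_ne_top μ _) hadd
    -- the main estimate
    refine ⟨1 / (9 * m0), by positivity, ?_⟩
    intro t ht
    have ht0 : (0:ℝ) < t := by linarith
    set K : ℕ := Nat.floor ((t - 1) / (2 * m0)) with hKdef
    set B : ℕ → Set Ω := fun n =>
      (S ∩ {ω | (∑ i ∈ Finset.range n, η i ω) ≤ t - 1}) ∩ {ω | t < η n ω} with hBdef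
    have hBmeas : ∀ n, MeasurableSet (B n) := fun n =>
      (hSm.inter (measurableSet_le (Finset.measurable_sum _ fun i _ => hηm i)
        measurable_const)).inter (measurableSet_lt measurable_const (hηm n))
    have hBsub : ∀ n ω, ω ∈ B n → ENNReal.ofReal (t ^ β) ≤ ENNReal.ofReal (Z t ω) := by
      intro n ω hω
      obtain ⟨⟨hωS, hω1⟩, hω2⟩ := hω
      have heq : ∀ i, ξ i ω = η i ω := hSsub hωS
      have hTeq : rT ξ n ω = ∑ i ∈ Finset.range n, η i ω :=
        Finset.sum_congr rfl fun i _ => heq i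
      have hT : rT ξ n ω ≤ t - 1 := by rw [hTeq]; exact hω1
      have hξn : t < ξ n ω := by rw [heq n]; exact hω2
      have hTnn : 0 ≤ rT ξ n ω := Stmt17.rT_nonneg (h1 ω) n
      have hrN : rN ξ t ω = n := by
        have hback := Stmt17.rN_eq (ξ := ξ) (ω := ω) (h1 ω) (n := n) (s := t - rT ξ n ω)
          (by linarith) (by linarith)
        rwa [add_sub_cancel] at hback
      apply ENNReal.ofReal_le_ofReal
      rw [hZ, hrN, if_pos (by linarith), mul_one]
      exact Real.rpow_le_rpow (by linarith) (le_of_lt hξn) hβ'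
    have hdisj2 : ∀ a b : ℕ, a < b → Disjoint (B a) (B b) := by
      intro a b hlt
      refine Set.disjoint_left.2 fun {ω} hωa hωb => ?_
      obtain ⟨⟨hSa, h1a⟩, h2a⟩ := hωa
      obtain ⟨⟨hSb, h1b⟩, h2b⟩ := hωb
      have heq : ∀ i, ξ i ω = η i ω := hSsub hSa
      have hTa : rT ξ (a+1) ω ≤ rT ξ b ω := Stmt17.rT_mono (h1 ω) hlt
      have h2a' : t < ξ a ω := by rw [heq a]; exact h2a
      have h1b' : rT ξ b ω ≤ t - 1 := by
        rw [show rT ξ b ω = ∑ i ∈ Finset.range b, η i ω from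
          Finset.sum_congr rfl fun i _ => heq i]
        exact h1b
      have hTann := Stmt17.rT_nonneg (h1 ω) a
      rw [Stmt17.rT_succ] at hTa
      linarith
    have hBdisj : (↑(Finset.range (K+1)) : Set ℕ).PairwiseDisjoint B := by
      intro a _ b _ hab
      rcases lt_or_gt_of_ne hab with h | h
      · exact hdisj2 a b h
      · exact (hdisj2 b a h).symm
    have hμB : ∀ n, n ≤ K →
        ENNReal.ofReal (1/2) * ENNReal.ofReal (t ^ (-α)) ≤ μ (B n) := by
      intro n hn
      have hBn : μ (B n) = μ ({ω | (∑ i ∈ Finset.range n, η i ω) ≤ t - 1}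
          ∩ {ω | t < η n ω}) := by
        refine measure_congr (Filter.eventuallyEq_set.2 ?_)
        filter_upwards [hSae] with ω hω
        simp only [hBdef, Set.mem_inter_iff, Set.mem_setOf_eq]
        tauto
      have hindepn : IndepFun (∑ i ∈ Finset.range n, η i) (η n) μ :=
        hηindep.indepFun_finsetSum_of_notMem hηm Finset.notMem_range_self
      have hprod : μ ({ω | (∑ i ∈ Finset.range n, η i ω) ≤ t - 1} ∩ {ω | t < η n ω})
          = μ {ω | (∑ i ∈ Finset.range n, η i ω) ≤ t - 1} * μ {ω | t < η n ω} := by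
        have hpre := hindepn.measure_inter_preimage_eq_mul (Set.Iic (t-1)) (Set.Ioi t)
          measurableSet_Iic measurableSet_Ioi
        have hs1 : (∑ i ∈ Finset.range n, η i) ⁻¹' (Set.Iic (t-1))
            = {ω | (∑ i ∈ Finset.range n, η i ω) ≤ t - 1} := by
          ext ω
          simp [Finset.sum_apply]
        have hs2 : (η n) ⁻¹' (Set.Ioi t) = {ω | t < η n ω} := rfl
        rw [hs1, hs2] at hpre
        exact hpre
      have htail : μ {ω | t < η n ω} = ENNReal.ofReal (t ^ (-α)) := by
        have ha' : μ {ω | t < η n ω} = μ {ω | t < ξ n ω} :=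
          (measure_congr (Filter.eventuallyEq_set.2 (by
            filter_upwards [hηae n] with ω hω
            rw [hω]))).symm
        have hb' : μ {ω | t < ξ n ω} = μ {ω | t < ξ 0 ω} :=
          (hident n).measure_mem_eq measurableSet_Ioi
        rw [ha', hb', hpareto t ht]
      have hhead : ENNReal.ofReal (1/2)
          ≤ μ {ω | (∑ i ∈ Finset.range n, η i ω) ≤ t - 1} := by
        apply hmarkov n t ht
        have hK : (K:ℝ) ≤ (t-1)/(2*m0) :=
          Nat.floor_le (div_nonneg (by linarith) (by positivity))
        have hnle : (n:ℝ) ≤ (t-1)/(2*m0) := le_trans (by exact_mod_cast hn) hK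
        calc (n:ℝ) * m0 ≤ ((t-1)/(2*m0)) * m0 := by nlinarith
          _ = (t-1)/2 := by field_simp
      rw [hBn, hprod, htail]
      exact mul_le_mul_left hhead _
    have hunion : ENNReal.ofReal (t ^ β) * ∑ n ∈ Finset.range (K+1), μ (B n)
        ≤ ∫⁻ ω, ENNReal.ofReal (Z t ω) ∂μ := by
      rw [← measure_biUnion_finset hBdisj fun n _ => hBmeas n]
      have hmU : MeasurableSet (⋃ n ∈ Finset.range (K+1), B n) :=
        (Finset.range (K+1)).measurableSet_biUnion fun n _ => hBmeas n
      calc ENNReal.ofReal (t ^ β) * μ (⋃ n ∈ Finset.range (K+1), B n)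
          = ∫⁻ ω, (⋃ n ∈ Finset.range (K+1), B n).indicator
              (fun _ => ENNReal.ofReal (t ^ β)) ω ∂μ := (lintegral_indicator_const hmU _).symm
        _ ≤ ∫⁻ ω, ENNReal.ofReal (Z t ω) ∂μ := by
            refine lintegral_mono fun ω => ?_
            by_cases hω : ω ∈ ⋃ n ∈ Finset.range (K+1), B n
            · obtain ⟨n, -, hn⟩ := Set.mem_iUnion₂.1 hω
              rw [Set.indicator_of_mem hω]
              exact hBsub n ω hn
            · rw [Set.indicator_of_notMem hω]
              exact bot_le
    have hsumlow : ((K+1 : ℕ) : ℝ≥0∞) * (ENNReal.ofReal (1/2) * ENNReal.ofReal (t ^ (-α)))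
        ≤ ∑ n ∈ Finset.range (K+1), μ (B n) := by
      calc ((K+1 : ℕ) : ℝ≥0∞) * (ENNReal.ofReal (1/2) * ENNReal.ofReal (t ^ (-α)))
          = ∑ _n ∈ Finset.range (K+1), (ENNReal.ofReal (1/2) * ENNReal.ofReal (t ^ (-α))) := by
            rw [Finset.sum_const, Finset.card_range, nsmul_eq_mul]
        _ ≤ ∑ n ∈ Finset.range (K+1), μ (B n) :=
            Finset.sum_le_sum fun n hn =>
              hμB n (by simpa [Nat.lt_succ_iff] using Finset.mem_range.1 hn)
    refine lt_of_lt_of_le ?_ (le_trans (mul_le_mul_right hsumlow _) hunion)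
    rw [show (((K+1 : ℕ)) : ℝ≥0∞) = ENNReal.ofReal ((K+1 : ℕ) : ℝ) from
      (ENNReal.ofReal_natCast _).symm,
      ← ENNReal.ofReal_mul (by norm_num : (0:ℝ) ≤ 1/2),
      ← ENNReal.ofReal_mul (by positivity : (0:ℝ) ≤ ((K+1 : ℕ) : ℝ)),
      ← ENNReal.ofReal_mul (by positivity : (0:ℝ) ≤ t ^ β)]
    rw [ENNReal.ofReal_lt_ofReal_iff (by positivity)]
    -- now a purely real inequality
    have hKlt : (t-1)/(2*m0) < ((K+1 : ℕ) : ℝ) := by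
      push_cast
      exact Nat.lt_floor_add_one _
    have hK1 : (1:ℝ) ≤ ((K+1 : ℕ) : ℝ) := by exact_mod_cast Nat.succ_le_succ (Nat.zero_le K)
    have hkey2 : 2 * t < 9 * m0 * ((K+1 : ℕ) : ℝ) := by
      rcases le_or_gt t 2 with h2 | h2
      · nlinarith [mul_le_mul hm01 hK1 zero_le_one (le_of_lt hm0pos)]
      · have h3 : t - 1 < 2 * m0 * ((K+1 : ℕ) : ℝ) := by
          rw [div_lt_iff₀ (by positivity)] at hKlt
          nlinarith
        nlinarith [mul_le_mul hm01 hK1 zero_le_one (le_of_lt hm0pos)]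
    have hkey : 1/(9*m0) * t < ((K+1 : ℕ) : ℝ) / 2 := by
      rw [show 1/(9*m0) * t = t/(9*m0) by ring,
        div_lt_div_iff₀ (by positivity) (by norm_num : (0:ℝ) < 2)]
      nlinarith
    have hpow1 : t ^ (1+β-α) = t * t ^ (β-α) := by
      rw [show 1+β-α = 1+(β-α) by ring, Real.rpow_add ht0, Real.rpow_one]
    have hpow2 : t ^ (β-α) = t ^ β * t ^ (-α) := by
      rw [show β-α = β + (-α) by ring, Real.rpow_add ht0]
    calc 1/(9*m0) * t ^ (1+β-α) = (1/(9*m0) * t) * t ^ (β-α) := by rw [hpow1]; ring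
      _ < (((K+1 : ℕ) : ℝ)/2) * t ^ (β-α) :=
          mul_lt_mul_of_pos_right hkey (Real.rpow_pos_of_pos ht0 _)
      _ = t ^ β * (((K+1 : ℕ) : ℝ) * (1/2 * t ^ (-α))) := by rw [hpow2]; ring

end
end
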